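/- In the example network (the path a — b — c with V_src = {a,c}, V_ld = {b}, α = 1), the payoff with the attacker's strategy fixed is neither submodular nor supermodular in the defender's strategy. Concretely: (i) with V_a = {a,c}, p({a,c},∅) = 1, p({a,c},{a}) = 0, p({a,c},{c}) = 0 and p({a,c},{a,c}) = 0, so p({a,c},{a,c}) − p({a,c},{a}) > p({a,c},{c}) − p({a,c},∅), violating submodularity of D ↦ p({a,c},D); and (ii) with V_a = {a,b,c}, p({a,b,c},∅) = 1, p({a,b,c},{a}) = 1, p({a,b,c},{b}) = 1 and p({a,b,c},{a,b}) = 0, so p({a,b,c},{a,b}) − p({a,b,c},{a}) < p({a,b,c},{b}) − p({a,b,c},∅), violating supermodularity of D ↦ p({a,b,c},D). -/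

import Mathlib

open scoped Classical

noncomputable section

variable {V : Type*} [Fintype V] [DecidableEq V]

/-- The number of shortest paths between `s` and `t` in `G` (σ_G(s,t)). -/
def numSP (G : SimpleGraph V) (s t : V) : ℕ :=
  Nat.card {w : G.Walk s t // w.length = G.dist s t}

/-- The number of shortest paths between `s` and `t` in `G` passing through edge `e`
(σ_G(s,t | e)). -/
def numSPthru (G : SimpleGraph V) (s t : V) (e : Sym2 V) : ℕ :=
  Nat.card {w : G.Walk s t // w.length = G.dist s t ∧ e ∈ w.edges}

/-- `N_G(t)`: the vertices of `Vsrc \ {t}` reachable from `t` in `G` at minimum distance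
from `t`. -/
def nearestSources (Vsrc : Finset V) (G : SimpleGraph V) (t : V) : Finset V :=
  ((Vsrc.erase t).filter (fun s => G.Reachable t s)).filter
    (fun s => ∀ s' ∈ (Vsrc.erase t).filter (fun s'' => G.Reachable t s''),
      G.dist t s ≤ G.dist t s')

/-- The load of edge `e` in `G`:
`load_G(e) = Σ_{t ∈ Vld} Σ_{s ∈ N_G(t)} σ_G(s,t|e) / (|N_G(t)|·σ_G(s,t))`. -/
def eload (Vsrc Vld : Finset V) (G : SimpleGraph V) (e : Sym2 V) : ℝ :=
  ∑ t ∈ Vld, ∑ s ∈ nearestSources Vsrc G t,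
    (numSPthru G s t e : ℝ) / (((nearestSources Vsrc G t).card : ℝ) * (numSP G s t : ℝ))

/-- The failure operator: removes every edge whose current load exceeds its capacity
`c_e = (1+α)·load_{G₀}(e)`. -/
def Fop (Vsrc Vld : Finset V) (G0 : SimpleGraph V) (α : ℝ) (G : SimpleGraph V) :
    SimpleGraph V where
  Adj u v := G.Adj u v ∧ eload Vsrc Vld G s(u, v) ≤ (1 + α) * eload Vsrc Vld G0 s(u, v)
  symm := ⟨by
    intro u v h
    refine ⟨h.1.symm, ?_⟩
    rw [Sym2.eq_swap]
    exact h.2⟩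
  loopless := ⟨fun v h => G.loopless.1 v h.1⟩

/-- `F*(G)`: the fixed point reached by iterating the failure operator (reached after at
most `|E|+1 ≤ (card V)^2` applications, since each non-trivial application removes an edge). -/
def Fstar (Vsrc Vld : Finset V) (G0 : SimpleGraph V) (α : ℝ) (G : SimpleGraph V) :
    SimpleGraph V :=
  (Fop Vsrc Vld G0 α)^[Fintype.card V ^ 2] G

/-- `G − S`: the (induced) subgraph obtained by deleting the vertices of `S`. -/
def deleteVerts (G : SimpleGraph V) (S : Finset V) : SimpleGraph V where
  Adj u v := G.Adj u v ∧ u ∉ S ∧ v ∉ S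
  symm := ⟨fun u v h => ⟨h.1.symm, h.2.2, h.2.1⟩⟩
  loopless := ⟨fun v h => G.loopless.1 v h.1⟩

/-- `disc(G)`: the number of load nodes from which no source (other than itself) is
reachable in `G`. -/
def disc (Vsrc Vld : Finset V) (G : SimpleGraph V) : ℕ :=
  (Vld.filter (fun t => ∀ s ∈ Vsrc, s ≠ t → ¬ G.Reachable t s)).card

/-- The payoff `p(V_a,V_d) = disc(F*(G₀ − (V_a \ V_d)))`. -/
def payoff (Vsrc Vld : Finset V) (G0 : SimpleGraph V) (α : ℝ) (Va Vd : Finset V) : ℕ :=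
  disc Vsrc Vld (Fstar Vsrc Vld G0 α (deleteVerts G0 (Va \ Vd)))

/-- `f` is submodular: adding an element to a larger set yields a smaller increment. -/
def IsSubmodular {β : Type*} [DecidableEq β] (f : Finset β → ℤ) : Prop :=
  ∀ ⦃S1 S2 : Finset β⦄, S1 ⊆ S2 → ∀ s ∉ S2,
    f (insert s S2) - f S2 ≤ f (insert s S1) - f S1

/-- `f` is supermodular: adding an element to a larger set yields a larger increment. -/
def IsSupermodular {β : Type*} [DecidableEq β] (f : Finset β → ℤ) : Prop :=
  ∀ ⦃S1 S2 : Finset β⦄, S1 ⊆ S2 → ∀ s ∉ S2,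
    f (insert s S1) - f S1 ≤ f (insert s S2) - f S2


-- ===== auxiliary lemmas =====

lemma eload_nonneg (Vsrc Vld : Finset V) (G : SimpleGraph V) (e : Sym2 V) :
    0 ≤ eload Vsrc Vld G e := by
  unfold eload
  refine Finset.sum_nonneg fun t _ => Finset.sum_nonneg fun s _ => ?_
  positivity

lemma Fop_self (Vsrc Vld : Finset V) (G0 : SimpleGraph V) {α : ℝ} (hα : 0 ≤ α) :
    Fop Vsrc Vld G0 α G0 = G0 := by
  ext u v
  constructor
  · exact fun h => h.1
  · intro h
    refine ⟨h, ?_⟩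
    have h0 := eload_nonneg Vsrc Vld G0 s(u, v)
    nlinarith

lemma Fop_bot (Vsrc Vld : Finset V) (G0 : SimpleGraph V) (α : ℝ) :
    Fop Vsrc Vld G0 α ⊥ = ⊥ := by
  ext u v
  exact ⟨fun h => h.1, fun h => h.elim⟩

lemma Fstar_of_fixed {Vsrc Vld : Finset V} {G0 G : SimpleGraph V} {α : ℝ}
    (h : Fop Vsrc Vld G0 α G = G) : Fstar Vsrc Vld G0 α G = G :=
  Function.iterate_fixed h _

lemma eq_of_walk_isolated {G : SimpleGraph V} {v u : V}
    (h : ∀ w, ¬ G.Adj v w) (p : G.Walk v u) : v = u := by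
  cases p with
  | nil => rfl
  | cons h' _ => exact absurd h' (h _)

lemma walk_length_one_eq {G : SimpleGraph V} {s t : V} (h : G.Adj s t)
    (w : G.Walk s t) (hw : w.length = 1) :
    w = SimpleGraph.Walk.cons h SimpleGraph.Walk.nil := by
  cases w with
  | nil => simp at hw
  | cons h' p =>
    have hp : p.length = 0 := by simpa using hw
    cases p with
    | nil => rfl
    | cons h'' q => simp at hp

lemma numSP_of_adj {G : SimpleGraph V} {s t : V} (h : G.Adj s t) : numSP G s t = 1 := by
  have hd : G.dist s t = 1 := SimpleGraph.dist_eq_one_iff_adj.mpr h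
  unfold numSP
  rw [hd, Nat.card_eq_one_iff_unique]
  refine ⟨⟨fun w1 w2 => ?_⟩, ⟨⟨.cons h .nil, by simp⟩⟩⟩
  apply Subtype.ext
  rw [walk_length_one_eq h w1.1 w1.2, walk_length_one_eq h w2.1 w2.2]

lemma numSPthru_self {G : SimpleGraph V} {s t : V} (h : G.Adj s t) :
    numSPthru G s t s(s, t) = 1 := by
  have hd : G.dist s t = 1 := SimpleGraph.dist_eq_one_iff_adj.mpr h
  unfold numSPthru
  rw [hd, Nat.card_eq_one_iff_unique]
  refine ⟨⟨fun w1 w2 => ?_⟩, ⟨⟨.cons h .nil, by simp, by simp⟩⟩⟩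
  apply Subtype.ext
  rw [walk_length_one_eq h w1.1 w1.2.1, walk_length_one_eq h w2.1 w2.2.1]

lemma numSPthru_ne {G : SimpleGraph V} {s t : V} (h : G.Adj s t) {e : Sym2 V}
    (he : e ≠ s(s, t)) : numSPthru G s t e = 0 := by
  have hd : G.dist s t = 1 := SimpleGraph.dist_eq_one_iff_adj.mpr h
  unfold numSPthru
  rw [hd, Nat.card_eq_zero]
  left
  constructor
  rintro ⟨w, hw, hmem⟩
  rw [walk_length_one_eq h w hw] at hmem
  simp only [SimpleGraph.Walk.edges_cons, SimpleGraph.Walk.edges_nil,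
    List.mem_singleton] at hmem
  exact he hmem

-- ===== concrete Fin 3 facts =====

namespace PathEx

abbrev G3 : SimpleGraph (Fin 3) := SimpleGraph.pathGraph 3
abbrev Pg : SimpleGraph (Fin 3) := deleteVerts G3 {2}
abbrev Qg : SimpleGraph (Fin 3) := deleteVerts G3 {0}

lemma adj01 : G3.Adj 0 1 := by rw [SimpleGraph.pathGraph_adj]; decide
lemma adj12 : G3.Adj 1 2 := by rw [SimpleGraph.pathGraph_adj]; decide
lemma adj10 : G3.Adj 1 0 := adj01.symm
lemma adj21 : G3.Adj 2 1 := adj12.symm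

lemma Padj01 : Pg.Adj 0 1 := ⟨adj01, by decide, by decide⟩
lemma Padj10 : Pg.Adj 1 0 := ⟨adj10, by decide, by decide⟩
lemma Qadj12 : Qg.Adj 1 2 := ⟨adj12, by decide, by decide⟩
lemma Qadj21 : Qg.Adj 2 1 := ⟨adj21, by decide, by decide⟩

lemma delete_eq_bot (S : Finset (Fin 3))
    (hS : ∀ u v : Fin 3, ((u : ℕ) + 1 = v ∨ (v : ℕ) + 1 = u) → u ∈ S ∨ v ∈ S) :
    deleteVerts G3 S = ⊥ := by
  ext u v
  simp only [SimpleGraph.bot_adj, iff_false]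
  rintro ⟨hadj, hu, hv⟩
  rw [SimpleGraph.pathGraph_adj] at hadj
  rcases hS u v hadj with h | h
  · exact hu h
  · exact hv h

lemma delete_empty : deleteVerts G3 ∅ = G3 := by
  ext u v
  exact ⟨fun h => h.1, fun h => ⟨h, Finset.notMem_empty u, Finset.notMem_empty v⟩⟩

lemma dist10 : G3.dist 1 0 = 1 := SimpleGraph.dist_eq_one_iff_adj.mpr adj10
lemma dist12 : G3.dist 1 2 = 1 := SimpleGraph.dist_eq_one_iff_adj.mpr adj12

lemma ns_G3 : nearestSources {0, 2} G3 1 = {0, 2} := by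
  unfold nearestSources
  have he : (({0, 2} : Finset (Fin 3)).erase 1) = {0, 2} := by decide
  rw [he]
  have h1 : (({0, 2} : Finset (Fin 3)).filter (fun s => G3.Reachable 1 s)) = {0, 2} := by
    refine Finset.filter_true_of_mem fun s hs => ?_
    fin_cases hs
    · exact adj10.reachable
    · exact adj12.reachable
  rw [h1]
  have h2 : ∀ s ∈ ({0, 2} : Finset (Fin 3)),
      ∀ s' ∈ ({0, 2} : Finset (Fin 3)), G3.dist 1 s ≤ G3.dist 1 s' := by
    intro s hs s' hs'
    fin_cases hs <;> fin_cases hs' <;> simp [dist10, dist12]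
  ext x
  simp only [Finset.mem_filter, and_iff_left_iff_imp]
  exact h2 x

lemma not_reach_P12 : ¬ Pg.Reachable 1 2 := by
  intro h
  obtain ⟨p⟩ := h.symm
  have : (2 : Fin 3) = 1 := by
    refine eq_of_walk_isolated (fun w => ?_) p
    rintro ⟨_, hu, _⟩
    exact hu (Finset.mem_singleton_self 2)
  simp at this

lemma not_reach_Q10 : ¬ Qg.Reachable 1 0 := by
  intro h
  obtain ⟨p⟩ := h.symm
  have : (0 : Fin 3) = 1 := by
    refine eq_of_walk_isolated (fun w => ?_) p
    rintro ⟨_, hu, _⟩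
    exact hu (Finset.mem_singleton_self 0)
  simp at this

lemma ns_P : nearestSources {0, 2} Pg 1 = {0} := by
  unfold nearestSources
  have he : (({0, 2} : Finset (Fin 3)).erase 1) = {0, 2} := by decide
  rw [he]
  have h1 : (({0, 2} : Finset (Fin 3)).filter (fun s => Pg.Reachable 1 s)) = {0} := by
    ext s
    simp only [Finset.mem_filter, Finset.mem_insert, Finset.mem_singleton]
    constructor
    · rintro ⟨(rfl | rfl), hr⟩
      · rfl
      · exact absurd hr not_reach_P12
    · rintro rfl
      exact ⟨Or.inl rfl, Padj10.reachable⟩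
  rw [h1]
  have h2 : ∀ s ∈ ({0} : Finset (Fin 3)),
      ∀ s' ∈ ({0} : Finset (Fin 3)), Pg.dist 1 s ≤ Pg.dist 1 s' := by
    intro s hs s' hs'
    fin_cases hs; fin_cases hs'; exact le_refl _
  ext x
  simp only [Finset.mem_filter, and_iff_left_iff_imp]
  exact h2 x

lemma ns_Q : nearestSources {0, 2} Qg 1 = {2} := by
  unfold nearestSources
  have he : (({0, 2} : Finset (Fin 3)).erase 1) = {0, 2} := by decide
  rw [he]
  have h1 : (({0, 2} : Finset (Fin 3)).filter (fun s => Qg.Reachable 1 s)) = {2} := by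
    ext s
    simp only [Finset.mem_filter, Finset.mem_insert, Finset.mem_singleton]
    constructor
    · rintro ⟨(rfl | rfl), hr⟩
      · exact absurd hr not_reach_Q10
      · rfl
    · rintro rfl
      exact ⟨Or.inr rfl, Qadj12.reachable⟩
  rw [h1]
  have h2 : ∀ s ∈ ({2} : Finset (Fin 3)),
      ∀ s' ∈ ({2} : Finset (Fin 3)), Qg.dist 1 s ≤ Qg.dist 1 s' := by
    intro s hs s' hs'
    fin_cases hs; fin_cases hs'; exact le_refl _
  ext x
  simp only [Finset.mem_filter, and_iff_left_iff_imp]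
  exact h2 x

lemma eload_G3_01 : eload {0, 2} {1} G3 s(0, 1) = 1 / 2 := by
  unfold eload
  rw [Finset.sum_singleton, ns_G3]
  rw [show ({0, 2} : Finset (Fin 3)) = insert 0 {2} from rfl,
    Finset.sum_insert (by decide), Finset.sum_singleton]
  rw [numSPthru_self adj01, numSP_of_adj adj01,
    numSPthru_ne adj21 (by decide), numSP_of_adj adj21]
  have hc : ({0, 2} : Finset (Fin 3)).card = 2 := rfl
  rw [hc]
  norm_num

lemma eload_G3_21 : eload {0, 2} {1} G3 s(2, 1) = 1 / 2 := by
  unfold eload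
  rw [Finset.sum_singleton, ns_G3]
  rw [show ({0, 2} : Finset (Fin 3)) = insert 0 {2} from rfl,
    Finset.sum_insert (by decide), Finset.sum_singleton]
  rw [numSPthru_ne adj01 (by decide), numSP_of_adj adj01,
    numSPthru_self adj21, numSP_of_adj adj21]
  have hc : ({0, 2} : Finset (Fin 3)).card = 2 := rfl
  rw [hc]
  norm_num

lemma eload_P_01 : eload {0, 2} {1} Pg s(0, 1) = 1 := by
  unfold eload
  rw [Finset.sum_singleton, ns_P, Finset.sum_singleton]
  rw [numSPthru_self Padj01, numSP_of_adj Padj01]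
  norm_num

lemma eload_Q_21 : eload {0, 2} {1} Qg s(2, 1) = 1 := by
  unfold eload
  rw [Finset.sum_singleton, ns_Q, Finset.sum_singleton]
  rw [numSPthru_self Qadj21, numSP_of_adj Qadj21]
  norm_num

end PathEx

namespace PathEx

lemma Fop_P : Fop {0, 2} {1} G3 1 Pg = Pg := by
  ext u v
  constructor
  · exact fun h => h.1
  · intro h
    refine ⟨h, ?_⟩
    have he : s(u, v) = s(0, 1) := by
      obtain ⟨hadj, hu, hv⟩ := h
      rw [SimpleGraph.pathGraph_adj] at hadj
      revert hadj hu hv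
      fin_cases u <;> fin_cases v <;> decide
    rw [he, eload_P_01, eload_G3_01]
    norm_num

lemma Fop_Q : Fop {0, 2} {1} G3 1 Qg = Qg := by
  ext u v
  constructor
  · exact fun h => h.1
  · intro h
    refine ⟨h, ?_⟩
    have he : s(u, v) = s(2, 1) := by
      obtain ⟨hadj, hu, hv⟩ := h
      rw [SimpleGraph.pathGraph_adj] at hadj
      revert hadj hu hv
      fin_cases u <;> fin_cases v <;> decide
    rw [he, eload_Q_21, eload_G3_21]
    norm_num

lemma filter_singleton_card_one {α : Type*} [DecidableEq α] {a : α} {p : α → Prop}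
    {inst : DecidablePred p} (h : p a) : (@Finset.filter α p inst {a}).card = 1 := by
  have he : @Finset.filter α p inst {a} = {a} := by
    ext x
    simp only [Finset.mem_filter, Finset.mem_singleton, and_iff_left_iff_imp]
    rintro rfl
    exact h
  rw [he, Finset.card_singleton]

lemma filter_card_zero {α : Type*} {s : Finset α} {p : α → Prop}
    {inst : DecidablePred p} (h : ∀ x ∈ s, ¬ p x) : (@Finset.filter α p inst s).card = 0 := by
  have he : @Finset.filter α p inst s = ∅ := by
    ext x
    simp only [Finset.mem_filter, Finset.notMem_empty, iff_false, not_and]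
    exact h x
  rw [he, Finset.card_empty]

lemma disc_bot : disc {0, 2} {1} (⊥ : SimpleGraph (Fin 3)) = 1 := by
  unfold disc
  refine filter_singleton_card_one ?_
  intro s _ hne hr
  exact hne (SimpleGraph.reachable_bot.mp hr).symm

lemma disc_zero_of_reach {G : SimpleGraph (Fin 3)} (h : G.Reachable 1 0) :
    disc {0, 2} {1} G = 0 := by
  unfold disc
  refine filter_card_zero ?_
  intro x hx
  rw [Finset.mem_singleton] at hx
  subst hx
  intro hall
  exact hall 0 (by decide) (by decide) h

lemma disc_zero_of_reach2 {G : SimpleGraph (Fin 3)} (h : G.Reachable 1 2) :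
    disc {0, 2} {1} G = 0 := by
  unfold disc
  refine filter_card_zero ?_
  intro x hx
  rw [Finset.mem_singleton] at hx
  subst hx
  intro hall
  exact hall 2 (by decide) (by decide) h

-- payoff values
lemma pay_bot (Va Vd : Finset (Fin 3))
    (h : deleteVerts G3 (Va \ Vd) = ⊥) :
    payoff {0, 2} {1} G3 1 Va Vd = 1 := by
  unfold payoff
  rw [h, Fstar_of_fixed (Fop_bot _ _ _ _), disc_bot]

lemma pay_P (Va Vd : Finset (Fin 3)) (h : Va \ Vd = {2}) :
    payoff {0, 2} {1} G3 1 Va Vd = 0 := by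
  unfold payoff
  rw [h, Fstar_of_fixed Fop_P]
  exact disc_zero_of_reach Padj10.reachable

lemma pay_Q (Va Vd : Finset (Fin 3)) (h : Va \ Vd = {0}) :
    payoff {0, 2} {1} G3 1 Va Vd = 0 := by
  unfold payoff
  rw [h, Fstar_of_fixed Fop_Q]
  exact disc_zero_of_reach2 Qadj12.reachable

lemma pay_full (Va Vd : Finset (Fin 3)) (h : Va \ Vd = ∅) :
    payoff {0, 2} {1} G3 1 Va Vd = 0 := by
  unfold payoff
  rw [h, delete_empty, Fstar_of_fixed (Fop_self _ _ _ (by norm_num))]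
  exact disc_zero_of_reach adj10.reachable

lemma pay_bot' (Va Vd S : Finset (Fin 3)) (h1 : Va \ Vd = S)
    (h2 : ∀ u v : Fin 3, ((u : ℕ) + 1 = v ∨ (v : ℕ) + 1 = u) → u ∈ S ∨ v ∈ S) :
    payoff {0, 2} {1} G3 1 Va Vd = 1 :=
  pay_bot _ _ (by rw [h1]; exact delete_eq_bot _ h2)

end PathEx

/-- In the path `a — b — c` (vertices `0,1,2` of `Fin 3`) with `V_src = {a,c}`,
`V_ld = {b}` and `α = 1`, the payoff with the attacker's strategy fixed is neither
submodular nor supermodular in the defender's strategy: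
(i) with `V_a = {a,c}`: `p = 1, 0, 0, 0` on defenses `∅, {a}, {c}, {a,c}`, and
`p({a,c},{a,c}) − p({a,c},{a}) > p({a,c},{c}) − p({a,c},∅)`, violating
submodularity of `D ↦ p({a,c},D)`;
(ii) with `V_a = {a,b,c}`: `p = 1, 1, 1, 0` on defenses `∅, {a}, {b}, {a,b}`, and
`p({a,b,c},{a,b}) − p({a,b,c},{a}) < p({a,b,c},{b}) − p({a,b,c},∅)`,
violating supermodularity of `D ↦ p({a,b,c},D)`. -/
theorem path_example_defender_neither_submodular_nor_supermodular :
    payoff ({0, 2} : Finset (Fin 3)) ({1} : Finset (Fin 3)) (SimpleGraph.pathGraph 3) 1 {0, 2} ∅ = 1 ∧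
    payoff ({0, 2} : Finset (Fin 3)) ({1} : Finset (Fin 3)) (SimpleGraph.pathGraph 3) 1 {0, 2} {0} = 0 ∧
    payoff ({0, 2} : Finset (Fin 3)) ({1} : Finset (Fin 3)) (SimpleGraph.pathGraph 3) 1 {0, 2} {2} = 0 ∧
    payoff ({0, 2} : Finset (Fin 3)) ({1} : Finset (Fin 3)) (SimpleGraph.pathGraph 3) 1 {0, 2} {0, 2} = 0 ∧
    ((payoff ({0, 2} : Finset (Fin 3)) ({1} : Finset (Fin 3)) (SimpleGraph.pathGraph 3) 1 {0, 2} {2} : ℤ) - (payoff ({0, 2} : Finset (Fin 3)) ({1} : Finset (Fin 3)) (SimpleGraph.pathGraph 3) 1 {0, 2} ∅ : ℤ) <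
      (payoff ({0, 2} : Finset (Fin 3)) ({1} : Finset (Fin 3)) (SimpleGraph.pathGraph 3) 1 {0, 2} {0, 2} : ℤ) - (payoff ({0, 2} : Finset (Fin 3)) ({1} : Finset (Fin 3)) (SimpleGraph.pathGraph 3) 1 {0, 2} {0} : ℤ)) ∧
    ¬ IsSubmodular (fun Vd : Finset (Fin 3) => (payoff ({0, 2} : Finset (Fin 3)) ({1} : Finset (Fin 3)) (SimpleGraph.pathGraph 3) 1 {0, 2} Vd : ℤ)) ∧
    payoff ({0, 2} : Finset (Fin 3)) ({1} : Finset (Fin 3)) (SimpleGraph.pathGraph 3) 1 {0, 1, 2} ∅ = 1 ∧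
    payoff ({0, 2} : Finset (Fin 3)) ({1} : Finset (Fin 3)) (SimpleGraph.pathGraph 3) 1 {0, 1, 2} {0} = 1 ∧
    payoff ({0, 2} : Finset (Fin 3)) ({1} : Finset (Fin 3)) (SimpleGraph.pathGraph 3) 1 {0, 1, 2} {1} = 1 ∧
    payoff ({0, 2} : Finset (Fin 3)) ({1} : Finset (Fin 3)) (SimpleGraph.pathGraph 3) 1 {0, 1, 2} {0, 1} = 0 ∧
    ((payoff ({0, 2} : Finset (Fin 3)) ({1} : Finset (Fin 3)) (SimpleGraph.pathGraph 3) 1 {0, 1, 2} {0, 1} : ℤ) - (payoff ({0, 2} : Finset (Fin 3)) ({1} : Finset (Fin 3)) (SimpleGraph.pathGraph 3) 1 {0, 1, 2} {0} : ℤ) <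
      (payoff ({0, 2} : Finset (Fin 3)) ({1} : Finset (Fin 3)) (SimpleGraph.pathGraph 3) 1 {0, 1, 2} {1} : ℤ) - (payoff ({0, 2} : Finset (Fin 3)) ({1} : Finset (Fin 3)) (SimpleGraph.pathGraph 3) 1 {0, 1, 2} ∅ : ℤ)) ∧
    ¬ IsSupermodular (fun Vd : Finset (Fin 3) => (payoff ({0, 2} : Finset (Fin 3)) ({1} : Finset (Fin 3)) (SimpleGraph.pathGraph 3) 1 {0, 1, 2} Vd : ℤ)) := by
  have pA0 : payoff ({0, 2} : Finset (Fin 3)) {1} (SimpleGraph.pathGraph 3) 1 {0, 2} ∅ = 1 :=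
    PathEx.pay_bot' _ _ {0, 2} (by decide) (by decide)
  have pA1 : payoff ({0, 2} : Finset (Fin 3)) {1} (SimpleGraph.pathGraph 3) 1 {0, 2} {0} = 0 :=
    PathEx.pay_P _ _ (by decide)
  have pA2 : payoff ({0, 2} : Finset (Fin 3)) {1} (SimpleGraph.pathGraph 3) 1 {0, 2} {2} = 0 :=
    PathEx.pay_Q _ _ (by decide)
  have pA3 : payoff ({0, 2} : Finset (Fin 3)) {1} (SimpleGraph.pathGraph 3) 1 {0, 2} {0, 2} = 0 :=
    PathEx.pay_full _ _ (by decide)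
  have pB0 : payoff ({0, 2} : Finset (Fin 3)) {1} (SimpleGraph.pathGraph 3) 1 {0, 1, 2} ∅ = 1 :=
    PathEx.pay_bot' _ _ {0, 1, 2} (by decide) (by decide)
  have pB1 : payoff ({0, 2} : Finset (Fin 3)) {1} (SimpleGraph.pathGraph 3) 1 {0, 1, 2} {0} = 1 :=
    PathEx.pay_bot' _ _ {1, 2} (by decide) (by decide)
  have pB2 : payoff ({0, 2} : Finset (Fin 3)) {1} (SimpleGraph.pathGraph 3) 1 {0, 1, 2} {1} = 1 :=
    PathEx.pay_bot' _ _ {0, 2} (by decide) (by decide)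
  have pB3 : payoff ({0, 2} : Finset (Fin 3)) {1} (SimpleGraph.pathGraph 3) 1 {0, 1, 2} {0, 1} = 0 :=
    PathEx.pay_P _ _ (by decide)
  refine ⟨pA0, pA1, pA2, pA3, ?_, ?_, pB0, pB1, pB2, pB3, ?_, ?_⟩
  · rw [pA2, pA0, pA3, pA1]; norm_num
  · intro h
    have e1 : insert (2 : Fin 3) (∅ : Finset (Fin 3)) = {2} := by decide
    have e2 : insert (2 : Fin 3) ({0} : Finset (Fin 3)) = {0, 2} := by decide
    have hh := h (Finset.empty_subset {0}) 2 (by decide)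
    simp only [e1, e2, pA0, pA1, pA2, pA3] at hh
    norm_num at hh
  · rw [pB3, pB1, pB2, pB0]; norm_num
  · intro h
    have e1 : insert (1 : Fin 3) (∅ : Finset (Fin 3)) = {1} := by decide
    have e2 : insert (1 : Fin 3) ({0} : Finset (Fin 3)) = {0, 1} := by decide
    have hh := h (Finset.empty_subset {0}) 1 (by decide)
    simp only [e1, e2, pB0, pB1, pB2, pB3] at hh
    norm_num at hh


end
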